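/- arXiv:1411.3984 — 3 statements merged into one kernel-verified Lean document; each statement's English description precedes it below -/
import Mathlib

section
/- Let S be a separable metric space, X an S-valued random variable on a probability space, and s ∈ S. Then the Ky Fan distance between X and the constant random variable s equals the Prokhorov distance between the law of X and the Dirac measure δ_s: α(X,s) = d_Pr(L(X), δ_s). -/
open MeasureTheory Metric Filter Topology

/-- Ky Fan metric: α(Z,W) = inf {ε ≥ 0 : P(d(Z,W) > ε) ≤ ε}. -/
noncomputable def kyFanDist {Ω S : Type*} [MeasurableSpace Ω] [PseudoMetricSpace S]
    (P : Measure Ω) (Z W : Ω → S) : ℝ :=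
  sInf {ε : ℝ | 0 ≤ ε ∧ P {ω | ε < dist (Z ω) (W ω)} ≤ ENNReal.ofReal ε}

/-- The Ky Fan distance between a random variable and a constant equals the Prokhorov
distance between its law and the corresponding Dirac measure. -/
theorem kyFan_eq_prokhorov_of_const {Ω S : Type*} [MeasurableSpace Ω]
    [MetricSpace S] [TopologicalSpace.SeparableSpace S] [MeasurableSpace S] [BorelSpace S]
    (P : Measure Ω) [IsProbabilityMeasure P] (X : Ω → S) (hX : Measurable X) (s : S) :
    kyFanDist P X (fun _ => s) = levyProkhorovDist (P.map X) (Measure.dirac s) := by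
  set μ : Measure S := P.map X with hμ
  have hP : IsProbabilityMeasure μ := Measure.isProbabilityMeasure_map hX.aemeasurable
  set ν : Measure S := Measure.dirac s with hν
  set K : Set ℝ := {ε : ℝ | 0 ≤ ε ∧ P {ω | ε < dist (X ω) s} ≤ ENNReal.ofReal ε} with hK
  have hKbdd : BddBelow K := ⟨0, fun x hx => hx.1⟩
  have hKne : K.Nonempty := by
    refine ⟨1, zero_le_one, ?_⟩
    calc P {ω | (1:ℝ) < dist (X ω) s} ≤ P Set.univ := measure_mono (Set.subset_univ _)
    _ = 1 := measure_univ
    _ = ENNReal.ofReal 1 := by simp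
  have edist_ne_top : levyProkhorovEDist μ ν ≠ ⊤ := levyProkhorovEDist_ne_top μ ν
  set D : ℝ := levyProkhorovDist μ ν with hD
  have hD0 : 0 ≤ D := ENNReal.toReal_nonneg
  -- the set used for measuring tail probabilities
  have hBmble : ∀ r : ℝ, MeasurableSet {x : S | r < dist x s} :=
    fun r => (isOpen_lt continuous_const (Continuous.dist continuous_id continuous_const)).measurableSet
  have hmap : ∀ r : ℝ, μ {x : S | r < dist x s} = P {ω | r < dist (X ω) s} := by
    intro r
    rw [hμ, Measure.map_apply hX (hBmble r)]
    rfl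
  apply le_antisymm
  · -- kyFan ≤ LP
    show sInf K ≤ D
    apply le_of_forall_pos_le_add
    intro δ hδ
    apply csInf_le hKbdd
    have hlt : levyProkhorovEDist μ ν < ENNReal.ofReal (D + δ) := by
      rw [ENNReal.lt_ofReal_iff_toReal_lt edist_ne_top]
      exact lt_add_of_pos_right _ hδ
    have h1 := left_measure_le_of_levyProkhorovEDist_lt hlt (hBmble (D + δ))
    rw [ENNReal.toReal_ofReal (by linarith)] at h1
    have hs : s ∉ thickening (D + δ) {x : S | (D + δ) < dist x s} := by
      rw [mem_thickening_iff]
      rintro ⟨z, hz, hzd⟩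
      rw [dist_comm] at hzd
      exact absurd hz (by simp only [Set.mem_setOf_eq, not_lt]; linarith)
    have hν0 : ν (thickening (D + δ) {x : S | (D + δ) < dist x s}) = 0 := by
      rw [hν, Measure.dirac_apply]
      simp [Set.indicator_of_notMem hs]
    refine ⟨by linarith, ?_⟩
    rw [← hmap]
    calc μ {x : S | (D + δ) < dist x s} ≤ _ + ENNReal.ofReal (D + δ) := h1
    _ = ENNReal.ofReal (D + δ) := by rw [hν0, zero_add]
  · -- LP ≤ kyFan
    show D ≤ sInf K
    have hα0 : 0 ≤ sInf K := le_csInf hKne fun x hx => hx.1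
    have key : levyProkhorovEDist μ ν ≤ ENNReal.ofReal (sInf K) := by
      apply levyProkhorovEDist_le_of_forall
      intro ε B hε hεtop hBm
      have he : sInf K < ε.toReal :=
        (ENNReal.ofReal_lt_iff_lt_toReal hα0 hεtop.ne).mp hε
      obtain ⟨t, htK, ht⟩ := (csInf_lt_iff hKbdd hKne).mp he
      have htail : P {ω | t < dist (X ω) s} ≤ ε := by
        calc P {ω | t < dist (X ω) s} ≤ ENNReal.ofReal t := htK.2
        _ ≤ ENNReal.ofReal ε.toReal := ENNReal.ofReal_le_ofReal ht.le
        _ = ε := ENNReal.ofReal_toReal hεtop.ne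
      constructor
      · -- μ B ≤ ν (thickening) + ε
        by_cases hsB : s ∈ thickening ε.toReal B
        · have : ν (thickening ε.toReal B) = 1 := by
            rw [hν, Measure.dirac_apply]
            simp [Set.indicator_of_mem hsB]
          rw [this]
          exact le_add_right prob_le_one
        · have hsub : B ⊆ {x : S | t < dist x s} := by
            intro x hx
            by_contra hcon
            apply hsB
            rw [mem_thickening_iff]
            refine ⟨x, hx, ?_⟩
            rw [dist_comm]
            simp only [Set.mem_setOf_eq, not_lt] at hcon
            exact lt_of_le_of_lt hcon ht
          calc μ B ≤ μ {x : S | t < dist x s} := measure_mono hsub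
          _ = P {ω | t < dist (X ω) s} := hmap t
          _ ≤ ε := htail
          _ ≤ ν (thickening ε.toReal B) + ε := le_add_self
      · -- ν B ≤ μ (thickening) + ε
        by_cases hsB : s ∈ B
        · have hcover : Set.univ ⊆ thickening ε.toReal B ∪ {x : S | t < dist x s} := by
            intro x _
            by_cases hx : t < dist x s
            · exact Or.inr hx
            · left
              rw [mem_thickening_iff]
              exact ⟨s, hsB, lt_of_le_of_lt (not_lt.mp hx) ht⟩
          have h1 : (1 : ENNReal) ≤ μ (thickening ε.toReal B) + P {ω | t < dist (X ω) s} := by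
            calc (1 : ENNReal) = μ Set.univ := measure_univ.symm
            _ ≤ μ (thickening ε.toReal B ∪ {x : S | t < dist x s}) :=
                measure_mono hcover
            _ ≤ μ (thickening ε.toReal B) + μ {x : S | t < dist x s} := measure_union_le _ _
            _ = _ := by rw [hmap t]
          calc ν B ≤ 1 := prob_le_one
          _ ≤ μ (thickening ε.toReal B) + P {ω | t < dist (X ω) s} := h1
          _ ≤ μ (thickening ε.toReal B) + ε := add_le_add le_rfl htail
        · have : ν B = 0 := by
            rw [hν, Measure.dirac_apply]
            simp [Set.indicator_of_notMem hsB]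
          simp [this]
    calc D = (levyProkhorovEDist μ ν).toReal := rfl
    _ ≤ (ENNReal.ofReal (sInf K)).toReal := ENNReal.toReal_mono ENNReal.ofReal_ne_top key
    _ = sInf K := ENNReal.toReal_ofReal hα0
end

section
/- Let S be a separable metric space and Z, W two S-valued random variables on a probability space (Ω, Σ, P). Then d_Pr(Z_*P, W_*P) ≤ α(Z, W), i.e., the Prokhorov distance between the laws is at most the Ky Fan distance between the random variables. -/
open MeasureTheory Metric Filter Topology

/-- The Prokhorov distance of the laws is at most the Ky Fan distance of the random
variables. -/
theorem prokhorov_le_kyFan {Ω S : Type*} [MeasurableSpace Ω]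
    [MetricSpace S] [TopologicalSpace.SeparableSpace S] [MeasurableSpace S] [BorelSpace S]
    (P : Measure Ω) [IsProbabilityMeasure P] (Z W : Ω → S)
    (hZ : Measurable Z) (hW : Measurable W) :
    levyProkhorovDist (P.map Z) (P.map W) ≤ kyFanDist P Z W := by
  have hPZ : IsProbabilityMeasure (P.map Z) := Measure.isProbabilityMeasure_map hZ.aemeasurable
  have hPW : IsProbabilityMeasure (P.map W) := Measure.isProbabilityMeasure_map hW.aemeasurable
  set A := {ε : ℝ | 0 ≤ ε ∧ P {ω | ε < dist (Z ω) (W ω)} ≤ ENNReal.ofReal ε} with hA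
  have hne : A.Nonempty := ⟨1, by norm_num, by
    calc P {ω | (1:ℝ) < dist (Z ω) (W ω)} ≤ P Set.univ := measure_mono (Set.subset_univ _)
    _ = 1 := measure_univ
    _ ≤ ENNReal.ofReal 1 := by simp⟩
  have hbdd : BddBelow A := ⟨0, fun x hx => hx.1⟩
  have hδnn : 0 ≤ kyFanDist P Z W := le_csInf hne fun x hx => hx.1
  apply levyProkhorovDist_le_of_forall_le _ _ hδnn
  intro ε B hε hB
  obtain ⟨ε', hε'A, hε'lt⟩ : ∃ ε' ∈ A, ε' < ε := by
    exact (csInf_lt_iff hbdd hne).mp hε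
  rw [Measure.map_apply hZ hB, Measure.map_apply hW isOpen_thickening.measurableSet]
  have hsub : Z ⁻¹' B ⊆ (W ⁻¹' thickening ε B) ∪ {ω | ε' < dist (Z ω) (W ω)} := by
    intro ω hω
    by_cases h : ε' < dist (Z ω) (W ω)
    · exact Or.inr h
    · left
      push_neg at h
      refine mem_thickening_iff.mpr ⟨Z ω, hω, ?_⟩
      rw [dist_comm]
      exact lt_of_le_of_lt h hε'lt
  calc P (Z ⁻¹' B) ≤ P (W ⁻¹' thickening ε B) + P {ω | ε' < dist (Z ω) (W ω)} :=
        le_trans (measure_mono hsub) (measure_union_le _ _)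
    _ ≤ P (W ⁻¹' thickening ε B) + ENNReal.ofReal ε :=
        add_le_add_right (le_trans hε'A.2 (ENNReal.ofReal_le_ofReal hε'lt.le)) _
end

section
/- Let X be a Borel subset of a separable metric space X' with inclusion map i : X → X'. Then the induced pushforward map i_* : M(X) → M(X') on Borel probability measures is isometric with respect to the Prokhorov metrics on M(X) and M(X'). -/
open MeasureTheory Metric Filter Topology EMetric Set

lemma preimage_thickening_image {X' : Type*} [MetricSpace X'] {X : Set X'}
    (ε : ℝ) (B : Set X) :
    (Subtype.val : X → X') ⁻¹' (Metric.thickening ε (Subtype.val '' B))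
      = Metric.thickening ε B := by
  ext x
  simp only [mem_preimage, Metric.mem_thickening_iff_infEdist_lt,
    EMetric.infEdist_image isometry_subtype_coe]

lemma thickening_preimage_subset {X' : Type*} [MetricSpace X'] {X : Set X'}
    (ε : ℝ) (B' : Set X') :
    Metric.thickening ε ((Subtype.val : X → X') ⁻¹' B')
      ⊆ (Subtype.val : X → X') ⁻¹' (Metric.thickening ε B') := by
  intro x hx
  simp only [Metric.mem_thickening_iff_infEdist_lt] at hx ⊢
  calc EMetric.infEdist (x : X') B'
      ≤ EMetric.infEdist (x : X') (Subtype.val '' ((Subtype.val : X → X') ⁻¹' B')) :=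
        EMetric.infEdist_anti (image_preimage_subset _ _)
    _ = EMetric.infEdist x ((Subtype.val : X → X') ⁻¹' B') :=
        EMetric.infEdist_image isometry_subtype_coe
    _ < _ := hx

/-- The pushforward along the inclusion of a Borel subset of a separable metric space is
an isometry for the Prokhorov metrics. -/
theorem prokhorov_isometric_subtype {X' : Type*} [MetricSpace X']
    [TopologicalSpace.SeparableSpace X'] [MeasurableSpace X'] [BorelSpace X']
    (X : Set X') (hX : MeasurableSet X)
    (μ ν : Measure X) [IsProbabilityMeasure μ] [IsProbabilityMeasure ν] :
    levyProkhorovDist (μ.map (Subtype.val : X → X')) (ν.map (Subtype.val : X → X')) =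
      levyProkhorovDist μ ν := by
  have hemb : MeasurableEmbedding (Subtype.val : X → X') :=
    MeasurableEmbedding.subtype_coe hX
  unfold levyProkhorovDist levyProkhorovEDist
  congr 1
  congr 1
  ext ε
  simp only [Set.mem_setOf_eq]
  constructor
  · intro h B hB
    have hB' : MeasurableSet (Subtype.val '' B) := hemb.measurableSet_image.mpr hB
    obtain ⟨h1, h2⟩ := h _ hB'
    rw [hemb.map_apply, hemb.map_apply, preimage_image_eq _ Subtype.val_injective,
      preimage_thickening_image] at h1 h2
    exact ⟨h1, h2⟩
  · intro h B' hB'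
    obtain ⟨h1, h2⟩ := h (Subtype.val ⁻¹' B') (hemb.measurable hB')
    simp only [hemb.map_apply]
    exact ⟨h1.trans (add_le_add_left
        (measure_mono (thickening_preimage_subset _ _)) _),
      h2.trans (add_le_add_left
        (measure_mono (thickening_preimage_subset _ _)) _)⟩
end
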